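/- L² bound for the semidiscrete harmonic extension: Let d ≥ 1, h > 0, and let u : ℤ^d → ℝ be finitely supported with {hj : u_j ≠ 0} contained in a compact set K ⊂ ℝ^d. Let ũ be the harmonic (s = 1/2) extension of u, ũ_j(t) := (t/(2√π)) ∫_0^∞ e^{−t²/(4z)} (e^{zΔ_d} u)_j z^{−3/2} dz, where (e^{zΔ_d} u)_j := Σ_{m∈ℤ^d} G(j−m, z/h²) u_m. Then for every set E = E_d × [0, C_{d+1}] with E_d ⊂ ℝ^d bounded and C_{d+1} > 0 there exists a constant C = C(d, K, E_d, C_{d+1}) > 1, independent of h and u, such that ‖ũ‖_{L²(E)} ≤ C ‖u‖_{H¹(K)}. -/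

import Mathlib

open scoped BigOperators ENNReal
open MeasureTheory

/-- The lattice point `hj ∈ ℝ^d` associated to `j ∈ ℤ^d`. -/
def latticePt (d : ℕ) (h : ℝ) (j : Fin d → ℤ) : Fin d → ℝ := fun i => h * (j i : ℝ)

/-- Squared `L²` norm on the lattice over a set `U ⊂ ℝ^d`:
`‖u‖²_{L²(U)} = h^d ∑_{hj ∈ U} |u_j|²`. -/
noncomputable def latL2sq (d : ℕ) (h : ℝ) (U : Set (Fin d → ℝ))
    (u : (Fin d → ℤ) → ℝ) : ℝ≥0∞ :=
  ENNReal.ofReal (h ^ d) *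
    ∑' j : Fin d → ℤ,
      Set.indicator {j : Fin d → ℤ | latticePt d h j ∈ U}
        (fun j => ENNReal.ofReal ((u j) ^ 2)) j

/-- The `k`-th component of the symmetric discrete gradient. -/
noncomputable def discGrad (d : ℕ) (h : ℝ) (u : (Fin d → ℤ) → ℝ) (k : Fin d)
    (j : Fin d → ℤ) : ℝ :=
  (u (j + Pi.single k 1) - u (j - Pi.single k 1)) / (2 * h)

/-- Squared `H¹` norm on the lattice over a set `U ⊂ ℝ^d`. -/
noncomputable def latH1sq (d : ℕ) (h : ℝ) (U : Set (Fin d → ℝ))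
    (u : (Fin d → ℤ) → ℝ) : ℝ≥0∞ :=
  latL2sq d h U u + ∑ k : Fin d, latL2sq d h U (discGrad d h u k)

/-- Squared semidiscrete `L²` norm over a set `B ⊂ ℝ^d × [0,∞)`:
`‖w‖²_{L²(B)} = h^d ∑_j ∫_{{t ≥ 0 : (hj,t) ∈ B}} |w(hj,t)|² dt`. -/
noncomputable def sdL2sq (d : ℕ) (h : ℝ) (B : Set ((Fin d → ℝ) × ℝ))
    (w : (Fin d → ℤ) → ℝ → ℝ) : ℝ≥0∞ :=
  ENNReal.ofReal (h ^ d) *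
    ∑' j : Fin d → ℤ,
      ∫⁻ t in {t : ℝ | 0 ≤ t ∧ (latticePt d h j, t) ∈ B}, ENNReal.ofReal ((w j t) ^ 2)

/-- The upper half ball `B_r^+ ⊂ ℝ^d × [0,∞)`. -/
def ballPlus (d : ℕ) (r : ℝ) : Set ((Fin d → ℝ) × ℝ) :=
  {p | 0 ≤ p.2 ∧ (∑ i, (p.1 i) ^ 2) + p.2 ^ 2 < r ^ 2}

/-- The boundary ball `B_r' ⊂ ℝ^d`. -/
def ballTan (d : ℕ) (r : ℝ) : Set (Fin d → ℝ) :=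
  {x | ∑ i, (x i) ^ 2 < r ^ 2}

/-- The discrete Laplacian on `(hℤ)^d`. -/
noncomputable def discLap (d : ℕ) (h : ℝ) (u : (Fin d → ℤ) → ℝ) (j : Fin d → ℤ) : ℝ :=
  (∑ i, (u (j + Pi.single i 1) - 2 * u j + u (j - Pi.single i 1))) / h ^ 2

/-- Derivative in the `t` variable (one-sided within `[0,∞)`). -/
noncomputable def dt (w : ℝ → ℝ) : ℝ → ℝ := derivWithin w (Set.Ici 0)

/-- Modified Bessel function of the first kind of integer order `k`. -/
noncomputable def besselI (k : ℤ) (t : ℝ) : ℝ :=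
  ∑' ℓ : ℕ, (t / 2) ^ (2 * ℓ + k.natAbs) /
    ((Nat.factorial ℓ : ℝ) * Real.Gamma ((ℓ : ℝ) + (k.natAbs : ℝ) + 1))

/-- Semidiscrete heat kernel `G(m,t) = e^{-2dt} ∏ I_{m_i}(2t)` on `ℤ^d`. -/
noncomputable def heatG (d : ℕ) (m : Fin d → ℤ) (t : ℝ) : ℝ :=
  Real.exp (-(2 * (d : ℝ) * t)) * ∏ i, besselI (m i) (2 * t)

/-- The semidiscrete heat semigroup `e^{zΔ_d} u`. -/
noncomputable def heatSemi (d : ℕ) (h : ℝ) (u : (Fin d → ℤ) → ℝ) (z : ℝ)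
    (j : Fin d → ℤ) : ℝ :=
  ∑' m : Fin d → ℤ, heatG d (j - m) (z / h ^ 2) * u m

/-- The harmonic (`s = 1/2`) semidiscrete Caffarelli--Silvestre extension of `u`. -/
noncomputable def harmExt (d : ℕ) (h : ℝ) (u : (Fin d → ℤ) → ℝ) (j : Fin d → ℤ)
    (t : ℝ) : ℝ :=
  (t / (2 * Real.sqrt Real.pi)) *
    ∫ z in Set.Ioi (0 : ℝ), Real.exp (-(t ^ 2 / (4 * z))) * heatSemi d h u z j / z ^ ((3 : ℝ) / 2)

section ExtensionAux

open scoped ENNReal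
open MeasureTheory Set

/-- Series term of the modified Bessel function. -/
noncomputable def bterm (n : ℕ) (t : ℝ) (ℓ : ℕ) : ℝ :=
  (t / 2) ^ (2 * ℓ + n) / ((Nat.factorial ℓ : ℝ) * (Nat.factorial (ℓ + n) : ℝ))

lemma bterm_nonneg (n : ℕ) {t : ℝ} (ht : 0 ≤ t) (ℓ : ℕ) : 0 ≤ bterm n t ℓ := by
  unfold bterm; positivity

lemma besselI_eq_tsum_bterm (k : ℤ) (t : ℝ) :
    besselI k t = ∑' ℓ : ℕ, bterm k.natAbs t ℓ := by
  unfold besselI bterm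
  congr 1; funext ℓ
  rw [show ((ℓ : ℝ) + (k.natAbs : ℝ) + 1) = ((ℓ + k.natAbs : ℕ) : ℝ) + 1 by push_cast; ring,
    Real.Gamma_nat_eq_factorial]

lemma bterm_summable (n : ℕ) {t : ℝ} (ht : 0 ≤ t) : Summable (bterm n t) := by
  have h := (Real.summable_pow_div_factorial ((t / 2) ^ 2)).mul_left ((t / 2) ^ n)
  refine h.of_nonneg_of_le (bterm_nonneg n ht) fun ℓ => ?_
  unfold bterm
  have h1 : (t / 2) ^ (2 * ℓ + n) / ((Nat.factorial ℓ : ℝ) * (Nat.factorial (ℓ + n) : ℝ)) ≤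
      (t / 2) ^ (2 * ℓ + n) / ((Nat.factorial ℓ : ℝ) * 1) := by
    have hfac : (1 : ℝ) ≤ (Nat.factorial (ℓ + n) : ℝ) :=
      by exact_mod_cast Nat.one_le_iff_ne_zero.mpr (Nat.factorial_ne_zero _)
    have hl : (0 : ℝ) < (Nat.factorial ℓ : ℝ) := by positivity
    apply div_le_div_of_nonneg_left (by positivity) (by positivity)
    nlinarith
  refine h1.trans (le_of_eq ?_)
  rw [mul_one, pow_add, pow_mul]
  ring

noncomputable def besselIM (n : ℕ) (t : ℝ) : ℝ≥0∞ := ∑' ℓ : ℕ, ENNReal.ofReal (bterm n t ℓ)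

lemma besselIM_measurable (n : ℕ) : Measurable (besselIM n) := by
  refine Measurable.ennreal_tsum fun ℓ => Measurable.ennreal_ofReal ?_
  unfold bterm
  fun_prop

lemma ofReal_besselI (k : ℤ) {t : ℝ} (ht : 0 ≤ t) :
    ENNReal.ofReal (besselI k t) = besselIM k.natAbs t := by
  rw [besselI_eq_tsum_bterm, besselIM,
    ENNReal.ofReal_tsum_of_nonneg (bterm_nonneg _ ht) (bterm_summable _ ht)]

lemma besselI_nonneg (k : ℤ) {t : ℝ} (ht : 0 ≤ t) : 0 ≤ besselI k t := by
  rw [besselI_eq_tsum_bterm]; exact tsum_nonneg (bterm_nonneg _ ht)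

lemma besselI_eq_toReal (k : ℤ) {t : ℝ} (ht : 0 ≤ t) :
    besselI k t = (besselIM k.natAbs t).toReal := by
  rw [← ofReal_besselI k ht, ENNReal.toReal_ofReal (besselI_nonneg k ht)]

/-- The bijection `(a,b) ↦ (a - b, min a b)` between `ℕ × ℕ` and `ℤ × ℕ`. -/
def pairEquiv : (ℕ × ℕ) ≃ (ℤ × ℕ) where
  toFun q := ((q.1 : ℤ) - q.2, min q.1 q.2)
  invFun p := (p.2 + p.1.toNat, p.2 + (-p.1).toNat)
  left_inv q := by
    obtain ⟨a, b⟩ := q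
    simp only [Prod.mk.injEq]
    constructor <;> omega
  right_inv p := by
    obtain ⟨k, ℓ⟩ := p
    simp only [Prod.mk.injEq]
    constructor <;> omega

lemma tsum_ofReal_besselI {t : ℝ} (ht : 0 ≤ t) :
    ∑' k : ℤ, ENNReal.ofReal (besselI k t) = ENNReal.ofReal (Real.exp t) := by
  have hexp : ∀ x : ℝ, Real.exp x = ∑' n : ℕ, x ^ n / n.factorial := by
    intro x; rw [Real.exp_eq_exp_ℝ, NormedSpace.exp_eq_tsum_div]
  have hg : ∀ x : ℝ, 0 ≤ x →
      ENNReal.ofReal (Real.exp x) = ∑' n : ℕ, ENNReal.ofReal (x ^ n / n.factorial) := by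
    intro x hx
    rw [hexp]
    exact ENNReal.ofReal_tsum_of_nonneg (fun n => by positivity)
      (Real.summable_pow_div_factorial x)
  calc ∑' k : ℤ, ENNReal.ofReal (besselI k t)
      = ∑' (k : ℤ) (ℓ : ℕ), ENNReal.ofReal (bterm k.natAbs t ℓ) := by
        exact tsum_congr fun k => by rw [ofReal_besselI _ ht]; rfl
    _ = ∑' p : ℤ × ℕ, ENNReal.ofReal (bterm p.1.natAbs t p.2) := ENNReal.tsum_prod.symm
    _ = ∑' q : ℕ × ℕ, ENNReal.ofReal (bterm ((pairEquiv q).1.natAbs) t (pairEquiv q).2) :=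
        (pairEquiv.tsum_eq fun p : ℤ × ℕ => ENNReal.ofReal (bterm p.1.natAbs t p.2)).symm
    _ = ∑' q : ℕ × ℕ,
          ENNReal.ofReal ((t / 2) ^ q.1 / q.1.factorial) *
            ENNReal.ofReal ((t / 2) ^ q.2 / q.2.factorial) := by
        refine tsum_congr fun q => ?_
        obtain ⟨a, b⟩ := q
        have h2 : 2 * min a b + ((a : ℤ) - b).natAbs = a + b := by omega
        have h3 : min a b + ((a : ℤ) - b).natAbs = max a b := by omega
        show ENNReal.ofReal (bterm ((a : ℤ) - b).natAbs t (min a b)) = _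
        unfold bterm
        rw [h2, show min a b + ((a : ℤ) - b).natAbs = max a b from h3,
          ← ENNReal.ofReal_mul (by positivity)]
        congr 1
        rcases le_total a b with hab | hab
        · rw [min_eq_left hab, max_eq_right hab, pow_add]; ring
        · rw [min_eq_right hab, max_eq_left hab, pow_add]; ring
    _ = (∑' a : ℕ, ENNReal.ofReal ((t / 2) ^ a / a.factorial)) *
          ∑' b : ℕ, ENNReal.ofReal ((t / 2) ^ b / b.factorial) := by
        rw [ENNReal.tsum_prod']
        simp_rw [ENNReal.tsum_mul_left]
        rw [ENNReal.tsum_mul_right]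
    _ = ENNReal.ofReal (Real.exp (t / 2)) * ENNReal.ofReal (Real.exp (t / 2)) := by
        rw [hg _ (by positivity)]
    _ = ENNReal.ofReal (Real.exp t) := by
        rw [← ENNReal.ofReal_mul (Real.exp_nonneg _), ← Real.exp_add]
        norm_num

end ExtensionAux
section ExtensionAux2

open scoped ENNReal
open MeasureTheory Set

lemma tsum_pi_prod (F : ℤ → ℝ≥0∞) :
    ∀ n : ℕ, ∑' m : Fin n → ℤ, ∏ i, F (m i) = (∑' k : ℤ, F k) ^ n := by
  intro n
  induction n with
  | zero =>
      simp only [Finset.univ_eq_empty, Finset.prod_empty, pow_zero]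
      exact tsum_eq_single default fun b hb => absurd (Subsingleton.elim b default) hb
  | succ n ih =>
      rw [← (Fin.consEquiv fun _ : Fin (n + 1) => ℤ).tsum_eq (fun m : Fin (n + 1) → ℤ => ∏ i, F (m i))]
      have hsplit : ∀ p : ℤ × (Fin n → ℤ),
          (∏ i, F (((Fin.consEquiv fun _ : Fin (n + 1) => ℤ) p) i)) = F p.1 * ∏ i, F (p.2 i) := by
        intro p
        rw [Fin.prod_univ_succ]
        simp [Fin.consEquiv]
      simp_rw [hsplit]
      rw [ENNReal.tsum_prod']
      simp_rw [ENNReal.tsum_mul_left]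
      rw [ENNReal.tsum_mul_right, ih, pow_succ]
      ring

lemma heatG_nonneg (d : ℕ) (m : Fin d → ℤ) {τ : ℝ} (hτ : 0 ≤ τ) : 0 ≤ heatG d m τ := by
  unfold heatG
  exact mul_nonneg (Real.exp_nonneg _)
    (Finset.prod_nonneg fun i _ => besselI_nonneg _ (by linarith))

lemma tsum_ofReal_heatG (d : ℕ) {τ : ℝ} (hτ : 0 ≤ τ) :
    ∑' m : Fin d → ℤ, ENNReal.ofReal (heatG d m τ) = 1 := by
  have h1 : ∀ m : Fin d → ℤ, ENNReal.ofReal (heatG d m τ) =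
      ENNReal.ofReal (Real.exp (-(2 * d * τ))) *
        ∏ i, ENNReal.ofReal (besselI (m i) (2 * τ)) := by
    intro m
    unfold heatG
    rw [ENNReal.ofReal_mul (Real.exp_nonneg _)]
    congr 1
    exact ENNReal.ofReal_prod_of_nonneg fun i _ => besselI_nonneg _ (by linarith)
  simp_rw [h1]
  rw [ENNReal.tsum_mul_left, tsum_pi_prod (fun k => ENNReal.ofReal (besselI k (2 * τ))) d,
    tsum_ofReal_besselI (by linarith), ← ENNReal.ofReal_pow (Real.exp_nonneg _),
    ← ENNReal.ofReal_mul (Real.exp_nonneg _), ← Real.exp_nat_mul, ← Real.exp_add]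
  have : -(2 * (d : ℝ) * τ) + (d : ℝ) * (2 * τ) = 0 := by ring
  rw [this, Real.exp_zero, ENNReal.ofReal_one]

/-- The discrete Young-type inequality: the heat semigroup is an `ℓ²` contraction. -/
lemma tsum_sq_heatSemi_le (d : ℕ) {h : ℝ} (hh : 0 < h) (u : (Fin d → ℤ) → ℝ)
    (S : Finset (Fin d → ℤ)) (hS : ∀ m ∉ S, u m = 0) {z : ℝ} (hz : 0 < z) :
    ∑' j : Fin d → ℤ, ENNReal.ofReal (heatSemi d h u z j ^ 2) ≤
      ∑ m ∈ S, ENNReal.ofReal (u m ^ 2) := by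
  set τ : ℝ := z / h ^ 2 with hτdef
  have hτ : 0 ≤ τ := by positivity
  have hH : ∀ j, heatSemi d h u z j = ∑ m ∈ S, heatG d (j - m) τ * u m := by
    intro j
    exact tsum_eq_sum fun m hm => by rw [hS m hm, mul_zero]
  have hre : ∀ j : Fin d → ℤ,
      ∑' m : Fin d → ℤ, ENNReal.ofReal (heatG d (j - m) τ) = 1 := by
    intro j
    rw [← tsum_ofReal_heatG d hτ]
    exact (Equiv.subLeft j).tsum_eq fun k => ENNReal.ofReal (heatG d k τ)
  have hmass : ∀ j : Fin d → ℤ, ∑ m ∈ S, heatG d (j - m) τ ≤ 1 := by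
    intro j
    have h2 : ENNReal.ofReal (∑ m ∈ S, heatG d (j - m) τ) ≤ 1 := by
      rw [ENNReal.ofReal_sum_of_nonneg fun m _ => heatG_nonneg d _ hτ]
      exact le_trans (ENNReal.sum_le_tsum S) (le_of_eq (hre j))
    rwa [ENNReal.ofReal_le_one] at h2
  have hCS : ∀ j, heatSemi d h u z j ^ 2 ≤ ∑ m ∈ S, heatG d (j - m) τ * u m ^ 2 := by
    intro j
    rw [hH j]
    have hnn : (0 : ℝ) ≤ ∑ m ∈ S, heatG d (j - m) τ * u m ^ 2 :=
      Finset.sum_nonneg fun m _ => mul_nonneg (heatG_nonneg d _ hτ) (sq_nonneg _)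
    calc (∑ m ∈ S, heatG d (j - m) τ * u m) ^ 2
        ≤ (∑ m ∈ S, heatG d (j - m) τ) * ∑ m ∈ S, heatG d (j - m) τ * u m ^ 2 :=
          Finset.sum_sq_le_sum_mul_sum_of_sq_eq_mul S (fun m _ => heatG_nonneg d _ hτ)
            (fun m _ => mul_nonneg (heatG_nonneg d _ hτ) (sq_nonneg _)) (fun m _ => by ring)
      _ ≤ 1 * ∑ m ∈ S, heatG d (j - m) τ * u m ^ 2 :=
          mul_le_mul_of_nonneg_right (hmass j) hnn
      _ = _ := one_mul _
  calc ∑' j : Fin d → ℤ, ENNReal.ofReal (heatSemi d h u z j ^ 2)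
      ≤ ∑' j : Fin d → ℤ, ∑ m ∈ S,
          ENNReal.ofReal (heatG d (j - m) τ) * ENNReal.ofReal (u m ^ 2) := by
        refine ENNReal.tsum_le_tsum fun j => ?_
        refine le_trans (ENNReal.ofReal_le_ofReal (hCS j)) (le_of_eq ?_)
        rw [ENNReal.ofReal_sum_of_nonneg
          fun m _ => mul_nonneg (heatG_nonneg d _ hτ) (sq_nonneg _)]
        exact Finset.sum_congr rfl fun m _ => ENNReal.ofReal_mul (heatG_nonneg d _ hτ)
    _ = ∑ m ∈ S, ∑' j : Fin d → ℤ,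
          ENNReal.ofReal (heatG d (j - m) τ) * ENNReal.ofReal (u m ^ 2) :=
        Summable.tsum_finsetSum fun m _ => ENNReal.summable
    _ = ∑ m ∈ S, ENNReal.ofReal (u m ^ 2) := by
        refine Finset.sum_congr rfl fun m _ => ?_
        rw [ENNReal.tsum_mul_right]
        have : ∑' j : Fin d → ℤ, ENNReal.ofReal (heatG d (j - m) τ) = 1 := by
          rw [← tsum_ofReal_heatG d hτ]
          exact (Equiv.subRight m).tsum_eq fun k => ENNReal.ofReal (heatG d k τ)
        rw [this, one_mul]

/-- Superadditivity of the lower integral, for countable sums: no measurability needed. -/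
lemma tsum_lintegral_le {ι : Type*} [Countable ι] {α : Type*} [MeasurableSpace α]
    (μ : Measure α) (f : ι → α → ℝ≥0∞) :
    ∑' i, ∫⁻ a, f i a ∂μ ≤ ∫⁻ a, ∑' i, f i a ∂μ := by
  rw [ENNReal.tsum_eq_iSup_sum]
  refine iSup_le fun s => ?_
  have h1 : ∑ i ∈ s, ∫⁻ a, f i a ∂μ ≤ ∫⁻ a, ∑ i ∈ s, f i a ∂μ := by
    classical
    induction s using Finset.induction with
    | empty => simp
    | @insert x s hx ih =>
        rw [Finset.sum_insert hx]
        refine le_trans (add_le_add_right ih _) ?_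
        refine le_trans (le_lintegral_add _ _) (le_of_eq (lintegral_congr fun a => ?_))
        rw [Finset.sum_insert hx]
  exact h1.trans (lintegral_mono fun a => ENNReal.sum_le_tsum s)

end ExtensionAux2
section ExtensionAux3

open scoped ENNReal
open MeasureTheory Set

lemma exp_neg_div_le {a z : ℝ} (ha : 0 < a) (hz : 0 < z) :
    Real.exp (-(a / z)) ≤ z / a := by
  have h1 : a / z < Real.exp (a / z) := by
    have := Real.add_one_le_exp (a / z)
    linarith
  have h2 : (0 : ℝ) < a / z := by positivity
  rw [Real.exp_neg]
  rw [inv_le_comm₀ (Real.exp_pos _) (by positivity)]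
  calc (z / a)⁻¹ = a / z := by rw [inv_div]
    _ ≤ Real.exp (a / z) := h1.le

lemma integral_rpow_Ioc {a : ℝ} (ha0 : 0 < a) :
    (∫⁻ z in Ioc (0 : ℝ) a, ENNReal.ofReal (z ^ (-(1 : ℝ) / 2) / a)) =
      ENNReal.ofReal (2 * a ^ ((1 : ℝ) / 2) / a) := by
  rw [← ofReal_integral_eq_lintegral_ofReal]
  · congr 1
    rw [MeasureTheory.integral_div, ← intervalIntegral.integral_of_le ha0.le,
      integral_rpow (Or.inl (by norm_num))]
    rw [Real.zero_rpow (by norm_num)]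
    norm_num
    ring
  · have h1 : IntervalIntegrable (fun z : ℝ => z ^ (-(1 : ℝ) / 2)) volume 0 a :=
      intervalIntegral.intervalIntegrable_rpow' (by norm_num)
    have h2 : IntegrableOn (fun z : ℝ => z ^ (-(1 : ℝ) / 2)) (Ioc 0 a) volume := by
      rw [intervalIntegrable_iff_integrableOn_Ioc_of_le ha0.le] at h1
      exact h1
    exact Integrable.div_const h2 a
  · refine (ae_restrict_iff' measurableSet_Ioc).2 (ae_of_all _ fun z hz => ?_)
    have : (0 : ℝ) < z := hz.1
    positivity

lemma integral_rpow_Ioi {a : ℝ} (ha0 : 0 < a) :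
    (∫⁻ z in Ioi a, ENNReal.ofReal (z ^ (-(3 : ℝ) / 2))) =
      ENNReal.ofReal (2 * a ^ (-(1 : ℝ) / 2)) := by
  rw [← ofReal_integral_eq_lintegral_ofReal]
  · congr 1
    have : (-(3 : ℝ) / 2) = (-3 / 2 : ℝ) := by norm_num
    rw [this, integral_Ioi_rpow_of_lt (by norm_num) ha0]
    norm_num
    ring
  · exact integrableOn_Ioi_rpow_of_lt (by norm_num) ha0
  · refine (ae_restrict_iff' measurableSet_Ioi).2 (ae_of_all _ fun z hz => ?_)
    exact Real.rpow_nonneg (ha0.trans hz).le _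

/-- The Poisson-type kernel has total mass at most `4/√π`, uniformly in `t > 0`. -/
lemma lintegral_W_le {t : ℝ} (ht : 0 < t) :
    (∫⁻ z in Ioi (0 : ℝ), ENNReal.ofReal (t / (2 * Real.sqrt Real.pi) *
      (Real.exp (-(t ^ 2 / (4 * z))) / z ^ ((3 : ℝ) / 2)))) ≤
      ENNReal.ofReal (4 / Real.sqrt Real.pi) := by
  have hπ : (0 : ℝ) < Real.sqrt Real.pi := Real.sqrt_pos.mpr Real.pi_pos
  set a : ℝ := t ^ 2 / 4 with ha
  have ha0 : 0 < a := by positivity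
  set c : ℝ := t / (2 * Real.sqrt Real.pi) with hc
  have hc0 : 0 ≤ c := by positivity
  have hsplit : Ioc (0 : ℝ) a ∪ Ioi a = Ioi 0 := Ioc_union_Ioi_eq_Ioi ha0.le
  have hkey : ∀ z : ℝ, t ^ 2 / (4 * z) = a / z := fun z => by
    rw [ha, div_div]
  calc (∫⁻ z in Ioi (0 : ℝ), ENNReal.ofReal (c *
        (Real.exp (-(t ^ 2 / (4 * z))) / z ^ ((3 : ℝ) / 2))))
      = ENNReal.ofReal c * ∫⁻ z in Ioi (0 : ℝ),
          ENNReal.ofReal (Real.exp (-(a / z)) / z ^ ((3 : ℝ) / 2)) := by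
        simp_rw [hkey, ENNReal.ofReal_mul hc0]
        exact lintegral_const_mul' _ _ ENNReal.ofReal_ne_top
    _ ≤ ENNReal.ofReal c *
        (ENNReal.ofReal (2 * a ^ ((1 : ℝ) / 2) / a) + ENNReal.ofReal (2 * a ^ (-(1 : ℝ) / 2))) := by
        refine mul_le_mul_right ?_ _
        rw [← hsplit, lintegral_union measurableSet_Ioi (Ioc_disjoint_Ioi le_rfl)]
        refine add_le_add ?_ ?_
        · refine le_trans ?_ (le_of_eq (integral_rpow_Ioc ha0))
          refine lintegral_mono_ae ((ae_restrict_iff' measurableSet_Ioc).2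
            (ae_of_all _ fun z hz => ENNReal.ofReal_le_ofReal ?_))
          have hz0 : 0 < z := hz.1
          have hP : (0 : ℝ) < z ^ ((3 : ℝ) / 2) := Real.rpow_pos_of_pos hz0 _
          have hrw : z ^ (-(1 : ℝ) / 2) / a = (z / a) / z ^ ((3 : ℝ) / 2) := by
            have h5 : z / z ^ ((3 : ℝ) / 2) = z ^ ((1 : ℝ) - 3 / 2) := by
              rw [Real.rpow_sub hz0, Real.rpow_one]
            have h6 : z ^ (-(1 : ℝ) / 2) = z / z ^ ((3 : ℝ) / 2) := by
              rw [h5]; norm_num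
            rw [h6]; ring
          rw [hrw]
          gcongr
          exact exp_neg_div_le ha0 hz0
        · refine le_trans ?_ (le_of_eq (integral_rpow_Ioi ha0))
          refine lintegral_mono_ae ((ae_restrict_iff' measurableSet_Ioi).2
            (ae_of_all _ fun z hz => ENNReal.ofReal_le_ofReal ?_))
          have hz0 : 0 < z := ha0.trans hz
          have hP : (0 : ℝ) < z ^ ((3 : ℝ) / 2) := Real.rpow_pos_of_pos hz0 _
          have hrw : z ^ (-(3 : ℝ) / 2) = 1 / z ^ ((3 : ℝ) / 2) := by
            rw [one_div, ← Real.rpow_neg hz0.le]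
            norm_num
          rw [hrw]
          gcongr
          · exact Real.exp_le_one_iff.mpr (neg_nonpos.mpr (by positivity))
    _ ≤ ENNReal.ofReal (4 / Real.sqrt Real.pi) := by
        rw [← ENNReal.ofReal_add (by positivity) (by positivity),
          ← ENNReal.ofReal_mul hc0]
        refine ENNReal.ofReal_le_ofReal (le_of_eq ?_)
        have hsq : a ^ ((1 : ℝ) / 2) = t / 2 := by
          rw [ha, show t ^ 2 / 4 = (t / 2) ^ 2 by ring, ← Real.rpow_natCast (t / 2) 2,
            ← Real.rpow_mul (by positivity : (0 : ℝ) ≤ t / 2)]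
          norm_num
        have hsqneg : a ^ (-(1 : ℝ) / 2) = 2 / t := by
          rw [show -(1 : ℝ) / 2 = -((1 : ℝ) / 2) by norm_num, Real.rpow_neg ha0.le, hsq]
          rw [inv_div]
        rw [hsq, hsqneg, hc, ha]
        rw [show t ^ 2 / 4 = (t / 2) ^ 2 by ring]
        field_simp
        ring

end ExtensionAux3
section ExtensionAux4

open scoped ENNReal
open MeasureTheory Set

lemma tsum_sq_harmExt_le (d : ℕ) {h : ℝ} (hh : 0 < h) (u : (Fin d → ℤ) → ℝ)
    (S : Finset (Fin d → ℤ)) (hS : ∀ m ∉ S, u m = 0) {t : ℝ} (ht : 0 ≤ t) :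
    ∑' j : Fin d → ℤ, ENNReal.ofReal (harmExt d h u j t ^ 2) ≤
      ENNReal.ofReal (4 / Real.sqrt Real.pi) ^ 2 * ∑ m ∈ S, ENNReal.ofReal (u m ^ 2) := by
  rcases eq_or_lt_of_le ht with rfl | ht0
  · simp [harmExt]
  set B : ℝ≥0∞ := ENNReal.ofReal (4 / Real.sqrt Real.pi) with hB
  set M : ℝ≥0∞ := ∑ m ∈ S, ENNReal.ofReal (u m ^ 2) with hM
  have hMtop : M ≠ ⊤ := by
    rw [hM]
    exact (ENNReal.sum_lt_top.mpr fun m _ => ENNReal.ofReal_lt_top).ne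
  set W : ℝ → ℝ≥0∞ := fun z => ENNReal.ofReal (t / (2 * Real.sqrt Real.pi) *
      (Real.exp (-(t ^ 2 / (4 * z))) / z ^ ((3 : ℝ) / 2))) with hWdef
  have hrpowm : Measurable fun z : ℝ => z ^ ((3 : ℝ) / 2) :=
    (Real.continuous_rpow_const (by norm_num)).measurable
  have hWmeas : Measurable W := by
    refine Measurable.ennreal_ofReal ?_
    refine Measurable.const_mul ?_ _
    exact (Real.measurable_exp.comp ((measurable_const.div (measurable_const.mul
      measurable_id))).neg).div hrpowm
  set A : (Fin d → ℤ) → ℝ → ℝ≥0∞ := fun j z => ENNReal.ofReal |heatSemi d h u z j| with hAdef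
  -- measurable surrogate for `heatSemi`
  have hb : ∀ n : ℕ, Measurable fun z : ℝ => (besselIM n (2 * (z / h ^ 2))).toReal := by
    intro n
    exact ((besselIM_measurable n).comp (by fun_prop)).ennreal_toReal
  have hHmeas : ∀ j : Fin d → ℤ, Measurable fun z : ℝ =>
      ∑ m ∈ S, (Real.exp (-(2 * d * (z / h ^ 2))) *
        ∏ i, (besselIM ((j - m) i).natAbs (2 * (z / h ^ 2))).toReal) * u m := by
    intro j
    refine Finset.measurable_sum _ fun m _ => Measurable.mul_const ?_ _
    exact (Real.measurable_exp.comp (by fun_prop)).mul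
      (Finset.measurable_prod _ fun i _ => hb _)
  have hHeq : ∀ (j : Fin d → ℤ), ∀ z ∈ Ioi (0 : ℝ), heatSemi d h u z j =
      ∑ m ∈ S, (Real.exp (-(2 * d * (z / h ^ 2))) *
        ∏ i, (besselIM ((j - m) i).natAbs (2 * (z / h ^ 2))).toReal) * u m := by
    intro j z hz
    have h2τ : (0 : ℝ) ≤ 2 * (z / h ^ 2) := by
      have := (mem_Ioi.mp hz).le
      positivity
    unfold heatSemi
    rw [tsum_eq_sum (fun m hm => by rw [hS m hm, mul_zero])]
    refine Finset.sum_congr rfl fun m _ => ?_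
    congr 1
    unfold heatG
    congr 1
    exact Finset.prod_congr rfl fun i _ => besselI_eq_toReal _ h2τ
  have hAmeas : ∀ j, AEMeasurable (A j) (volume.restrict (Ioi (0 : ℝ))) := by
    intro j
    refine AEMeasurable.congr ((hHmeas j).abs.ennreal_ofReal.aemeasurable) ?_
    refine (ae_restrict_iff' measurableSet_Ioi).2 (ae_of_all _ fun z hz => ?_)
    simp only [hAdef]
    rw [hHeq j z hz]
  -- Step 1
  have hstep1 : ∀ j, ENNReal.ofReal (harmExt d h u j t ^ 2) ≤
      (∫⁻ z in Ioi (0 : ℝ), W z * A j z) ^ 2 := by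
    intro j
    have h1 : harmExt d h u j t = ∫ z in Ioi (0 : ℝ),
        (t / (2 * Real.sqrt Real.pi)) *
          (Real.exp (-(t ^ 2 / (4 * z))) * heatSemi d h u z j / z ^ ((3 : ℝ) / 2)) := by
      unfold harmExt
      exact (integral_const_mul _ _).symm
    have h2 : ENNReal.ofReal (harmExt d h u j t ^ 2) =
        ENNReal.ofReal |harmExt d h u j t| ^ 2 := by
      rw [← ENNReal.ofReal_pow (abs_nonneg _), sq_abs]
    rw [h2]
    refine pow_le_pow_left₀ zero_le ?_ 2
    rw [h1]
    calc ENNReal.ofReal |∫ z in Ioi (0 : ℝ), (t / (2 * Real.sqrt Real.pi)) *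
          (Real.exp (-(t ^ 2 / (4 * z))) * heatSemi d h u z j / z ^ ((3 : ℝ) / 2))|
        ≤ ∫⁻ z in Ioi (0 : ℝ), ENNReal.ofReal |(t / (2 * Real.sqrt Real.pi)) *
            (Real.exp (-(t ^ 2 / (4 * z))) * heatSemi d h u z j / z ^ ((3 : ℝ) / 2))| := by
          rw [← Real.enorm_eq_ofReal_abs]
          simp_rw [← Real.enorm_eq_ofReal_abs]
          exact enorm_integral_le_lintegral_enorm _
      _ = ∫⁻ z in Ioi (0 : ℝ), W z * A j z := by
          refine setLIntegral_congr_fun measurableSet_Ioi (fun z hz => ?_)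
          have hz0 : (0 : ℝ) < z := mem_Ioi.mp hz
          have hP : (0 : ℝ) < z ^ ((3 : ℝ) / 2) := Real.rpow_pos_of_pos hz0 _
          have hw0 : 0 ≤ t / (2 * Real.sqrt Real.pi) *
              (Real.exp (-(t ^ 2 / (4 * z))) / z ^ ((3 : ℝ) / 2)) := by positivity
          have hfac : (t / (2 * Real.sqrt Real.pi)) *
              (Real.exp (-(t ^ 2 / (4 * z))) * heatSemi d h u z j / z ^ ((3 : ℝ) / 2)) =
              (t / (2 * Real.sqrt Real.pi) *
                (Real.exp (-(t ^ 2 / (4 * z))) / z ^ ((3 : ℝ) / 2))) * heatSemi d h u z j := by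
            ring
          rw [hfac, abs_mul, abs_of_nonneg hw0, ENNReal.ofReal_mul hw0]
  -- Step 2 : Cauchy-Schwarz (Hölder with p = q = 2)
  have hsqrt : ∀ x : ℝ≥0∞, (x ^ ((1 : ℝ) / 2)) ^ (2 : ℕ) = x := by
    intro x
    rw [← ENNReal.rpow_natCast (x ^ ((1 : ℝ) / 2)) 2, ← ENNReal.rpow_mul]
    norm_num
  have hstep2 : ∀ j, (∫⁻ z in Ioi (0 : ℝ), W z * A j z) ^ 2 ≤
      (∫⁻ z in Ioi (0 : ℝ), W z) * ∫⁻ z in Ioi (0 : ℝ), W z * A j z ^ 2 := by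
    intro j
    have hconj : Real.HolderConjugate 2 2 := Real.HolderConjugate.two_two
    set f : ℝ → ℝ≥0∞ := fun z => W z ^ ((1 : ℝ) / 2) with hf
    set g : ℝ → ℝ≥0∞ := fun z => W z ^ ((1 : ℝ) / 2) * A j z with hg
    have hfm : AEMeasurable f (volume.restrict (Ioi (0 : ℝ))) :=
      (ENNReal.continuous_rpow_const.measurable.comp hWmeas).aemeasurable
    have hgm : AEMeasurable g (volume.restrict (Ioi (0 : ℝ))) := hfm.mul (hAmeas j)
    have key := ENNReal.lintegral_mul_le_Lp_mul_Lq (volume.restrict (Ioi (0 : ℝ)))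
      hconj hfm hgm
    have hfg : ∀ z, (f * g) z = W z * A j z := by
      intro z
      show W z ^ ((1 : ℝ) / 2) * (W z ^ ((1 : ℝ) / 2) * A j z) = W z * A j z
      rw [← mul_assoc, ← ENNReal.rpow_add_of_nonneg _ _ (by norm_num) (by norm_num)]
      norm_num
    have hfsq : ∀ z, f z ^ (2 : ℝ) = W z := by
      intro z
      show (W z ^ ((1 : ℝ) / 2)) ^ (2 : ℝ) = W z
      rw [← ENNReal.rpow_mul]
      norm_num
    have hA2 : ∀ x : ℝ≥0∞, x ^ (2 : ℝ) = x ^ (2 : ℕ) := by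
      intro x
      rw [← ENNReal.rpow_natCast x 2]
      norm_num
    have hgsq : ∀ z, g z ^ (2 : ℝ) = W z * A j z ^ 2 := by
      intro z
      show (W z ^ ((1 : ℝ) / 2) * A j z) ^ (2 : ℝ) = W z * A j z ^ 2
      rw [ENNReal.mul_rpow_of_nonneg _ _ (by norm_num : (0:ℝ) ≤ 2), hA2, hA2, hsqrt]
    calc (∫⁻ z in Ioi (0 : ℝ), W z * A j z) ^ 2
        = (∫⁻ z in Ioi (0 : ℝ), (f * g) z) ^ 2 := by
          congr 1
          exact lintegral_congr fun z => (hfg z).symm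
      _ ≤ ((∫⁻ z in Ioi (0 : ℝ), f z ^ (2 : ℝ)) ^ ((1 : ℝ) / 2) *
            (∫⁻ z in Ioi (0 : ℝ), g z ^ (2 : ℝ)) ^ ((1 : ℝ) / 2)) ^ 2 :=
          pow_le_pow_left₀ zero_le (by simpa using key) 2
      _ = (∫⁻ z in Ioi (0 : ℝ), f z ^ (2 : ℝ)) * ∫⁻ z in Ioi (0 : ℝ), g z ^ (2 : ℝ) := by
          rw [mul_pow, hsqrt, hsqrt]
      _ = (∫⁻ z in Ioi (0 : ℝ), W z) * ∫⁻ z in Ioi (0 : ℝ), W z * A j z ^ 2 := by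
          rw [lintegral_congr hfsq, lintegral_congr hgsq]
  -- Step 3 : the discrete Young inequality at fixed z
  have hstep3 : ∀ z ∈ Ioi (0 : ℝ), ∑' j : Fin d → ℤ, A j z ^ 2 ≤ M := by
    intro z hz
    have hAsq : ∀ j : Fin d → ℤ, A j z ^ 2 = ENNReal.ofReal (heatSemi d h u z j ^ 2) := by
      intro j
      show ENNReal.ofReal |heatSemi d h u z j| ^ 2 = _
      rw [← ENNReal.ofReal_pow (abs_nonneg _), sq_abs]
    calc ∑' j : Fin d → ℤ, A j z ^ 2
        = ∑' j : Fin d → ℤ, ENNReal.ofReal (heatSemi d h u z j ^ 2) := tsum_congr hAsq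
      _ ≤ M := tsum_sq_heatSemi_le d hh u S hS (mem_Ioi.mp hz)
  -- total mass of the kernel
  have hWle : (∫⁻ z in Ioi (0 : ℝ), W z) ≤ B := lintegral_W_le ht0
  -- assemble
  calc ∑' j : Fin d → ℤ, ENNReal.ofReal (harmExt d h u j t ^ 2)
      ≤ ∑' j : Fin d → ℤ, (∫⁻ z in Ioi (0 : ℝ), W z) *
          ∫⁻ z in Ioi (0 : ℝ), W z * A j z ^ 2 :=
        ENNReal.tsum_le_tsum fun j => (hstep1 j).trans (hstep2 j)
    _ = (∫⁻ z in Ioi (0 : ℝ), W z) *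
          ∑' j : Fin d → ℤ, ∫⁻ z in Ioi (0 : ℝ), W z * A j z ^ 2 := ENNReal.tsum_mul_left
    _ ≤ B * ∑' j : Fin d → ℤ, ∫⁻ z in Ioi (0 : ℝ), W z * A j z ^ 2 :=
        mul_le_mul_left hWle _
    _ ≤ B * ∫⁻ z in Ioi (0 : ℝ), ∑' j : Fin d → ℤ, W z * A j z ^ 2 :=
        mul_le_mul_right (tsum_lintegral_le _ _) _
    _ = B * ∫⁻ z in Ioi (0 : ℝ), W z * ∑' j : Fin d → ℤ, A j z ^ 2 := by
        congr 1
        exact lintegral_congr fun z => ENNReal.tsum_mul_left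
    _ ≤ B * ∫⁻ z in Ioi (0 : ℝ), W z * M := by
        refine mul_le_mul_right (lintegral_mono_ae ((ae_restrict_iff' measurableSet_Ioi).2
          (ae_of_all _ fun z hz => mul_le_mul_right (hstep3 z hz) _))) _
    _ = B * ((∫⁻ z in Ioi (0 : ℝ), W z) * M) := by
        rw [lintegral_mul_const' M _ hMtop]
    _ ≤ B * (B * M) := mul_le_mul_right (mul_le_mul_left hWle M) _
    _ = B ^ 2 * M := by ring

end ExtensionAux4
/-- `L²` bound for the semidiscrete harmonic extension:
`‖ũ‖_{L²(E_d × [0,C_{d+1}])} ≤ C ‖u‖_{H¹(K)}`, uniformly in `h` and `u`. -/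
theorem extension_L2_bound (d : ℕ) (hd : 1 ≤ d) (K : Set (Fin d → ℝ)) (hK : IsCompact K)
    (Ed : Set (Fin d → ℝ)) (hEd : Bornology.IsBounded Ed) (Cd1 : ℝ) (hCd1 : 0 < Cd1) :
    ∃ C : ℝ, 1 < C ∧ ∀ h : ℝ, 0 < h → ∀ u : (Fin d → ℤ) → ℝ,
      (Function.support u).Finite → (∀ j, u j ≠ 0 → latticePt d h j ∈ K) →
      (sdL2sq d h (Ed ×ˢ Set.Icc (0 : ℝ) Cd1) (harmExt d h u)) ^ ((1 : ℝ) / 2) ≤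
        ENNReal.ofReal C * (latH1sq d h K u) ^ ((1 : ℝ) / 2) := by
  classical
  refine ⟨3 * Real.sqrt Cd1 + 2, ?_, ?_⟩
  · have := Real.sqrt_nonneg Cd1
    linarith
  intro h hh u hu hsupp
  set S : Finset (Fin d → ℤ) := hu.toFinset with hSdef
  have hS : ∀ m ∉ S, u m = 0 := by
    intro m hm
    by_contra hne
    exact hm (hu.mem_toFinset.mpr hne)
  set M : ℝ≥0∞ := ∑ m ∈ S, ENNReal.ofReal (u m ^ 2) with hM
  set B : ℝ≥0∞ := ENNReal.ofReal (4 / Real.sqrt Real.pi) with hB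
  have hbound : sdL2sq d h (Ed ×ˢ Set.Icc (0 : ℝ) Cd1) (harmExt d h u) ≤
      B ^ 2 * ENNReal.ofReal Cd1 * (ENNReal.ofReal (h ^ d) * M) := by
    have h1 : sdL2sq d h (Ed ×ˢ Set.Icc (0 : ℝ) Cd1) (harmExt d h u) ≤
        ENNReal.ofReal (h ^ d) * ∑' j : Fin d → ℤ,
          ∫⁻ t in Set.Icc (0 : ℝ) Cd1, ENNReal.ofReal (harmExt d h u j t ^ 2) := by
      unfold sdL2sq
      exact mul_le_mul_right
        (ENNReal.tsum_le_tsum fun j => lintegral_mono_set fun t ht => ht.2.2) _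
    refine h1.trans ?_
    calc ENNReal.ofReal (h ^ d) * ∑' j : Fin d → ℤ,
          ∫⁻ t in Set.Icc (0 : ℝ) Cd1, ENNReal.ofReal (harmExt d h u j t ^ 2)
        ≤ ENNReal.ofReal (h ^ d) * ∫⁻ t in Set.Icc (0 : ℝ) Cd1,
            ∑' j : Fin d → ℤ, ENNReal.ofReal (harmExt d h u j t ^ 2) :=
          mul_le_mul_right (tsum_lintegral_le _ _) _
      _ ≤ ENNReal.ofReal (h ^ d) * ∫⁻ _ in Set.Icc (0 : ℝ) Cd1, B ^ 2 * M := by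
          refine mul_le_mul_right (lintegral_mono_ae ((ae_restrict_iff' measurableSet_Icc).2
            (ae_of_all _ fun t htI => ?_))) _
          exact tsum_sq_harmExt_le d hh u S hS htI.1
      _ = ENNReal.ofReal (h ^ d) * (B ^ 2 * M * ENNReal.ofReal Cd1) := by
          rw [setLIntegral_const, Real.volume_Icc]
          norm_num
      _ = B ^ 2 * ENNReal.ofReal Cd1 * (ENNReal.ofReal (h ^ d) * M) := by ring
  have hlat : ENNReal.ofReal (h ^ d) * M ≤ latH1sq d h K u := by
    refine le_trans ?_ le_self_add
    unfold latL2sq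
    refine mul_le_mul_right ?_ _
    calc M = ∑ m ∈ S, Set.indicator {j : Fin d → ℤ | latticePt d h j ∈ K}
          (fun j => ENNReal.ofReal (u j ^ 2)) m := by
          refine Finset.sum_congr rfl fun m hm => ?_
          rw [Set.indicator_of_mem]
          exact hsupp m (by simpa [hSdef, Function.mem_support] using hm)
      _ ≤ ∑' j : Fin d → ℤ, Set.indicator {j : Fin d → ℤ | latticePt d h j ∈ K}
          (fun j => ENNReal.ofReal (u j ^ 2)) j := ENNReal.sum_le_tsum S
  have htotal : sdL2sq d h (Ed ×ˢ Set.Icc (0 : ℝ) Cd1) (harmExt d h u) ≤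
      B ^ 2 * ENNReal.ofReal Cd1 * latH1sq d h K u :=
    hbound.trans (mul_le_mul_right hlat _)
  refine (ENNReal.rpow_le_rpow htotal (by norm_num : (0:ℝ) ≤ 1/2)).trans ?_
  rw [ENNReal.mul_rpow_of_nonneg _ _ (by norm_num : (0:ℝ) ≤ 1/2)]
  refine mul_le_mul_left ?_ _
  have hπ : (0 : ℝ) < Real.sqrt Real.pi := Real.sqrt_pos.mpr Real.pi_pos
  have hBc : B ^ 2 * ENNReal.ofReal Cd1 =
      ENNReal.ofReal ((4 / Real.sqrt Real.pi) ^ 2 * Cd1) := by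
    rw [hB, ← ENNReal.ofReal_pow (by positivity), ← ENNReal.ofReal_mul (by positivity)]
  rw [hBc, ENNReal.ofReal_rpow_of_nonneg (by positivity) (by norm_num)]
  refine ENNReal.ofReal_le_ofReal ?_
  rw [← Real.sqrt_eq_rpow]
  have hval : Real.sqrt ((4 / Real.sqrt Real.pi) ^ 2 * Cd1) =
      (4 / Real.sqrt Real.pi) * Real.sqrt Cd1 := by
    rw [Real.sqrt_mul (by positivity), Real.sqrt_sq (by positivity)]
  rw [hval]
  have h43 : 4 / Real.sqrt Real.pi ≤ 3 := by
    rw [div_le_iff₀ hπ]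
    nlinarith [Real.sq_sqrt Real.pi_pos.le, Real.pi_gt_three, Real.sqrt_nonneg Real.pi]
  nlinarith [Real.sqrt_nonneg Cd1]
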